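/- For all real numbers w_1, w_2 with 0 ≤ w_1 ≤ 7/20, 7/20 ≤ w_2 ≤ 63/100 and 63/100 ≤ w_1 + w_2 ≤ 1, one has −(65/7)·w_1·w_2 + (129/20)·w_1 − (50/7)·w_2² + (799/70)·w_2 − 24/5 ≤ −117351/560000. -/
import Mathlib


/-- appendix case `I₁ × I₂ × I₃`, `x = (1,1,1)`: the polynomial
is at most `−117351/560000` on the region. -/
theorem appendix_I1_I2_I3_111 (w1 w2 : ℝ)
    (h1 : 0 ≤ w1) (h2 : w1 ≤ 7/20) (h3 : 7/20 ≤ w2) (h4 : w2 ≤ 63/100)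
    (h5 : 63/100 ≤ w1 + w2) (h6 : w1 + w2 ≤ 1) :
    -(65/7) * w1 * w2 + (129/20) * w1 - (50/7) * w2^2 + (799/70) * w2 - 24/5
      ≤ -117351/560000 := by
  nlinarith [mul_nonneg (sub_nonneg.2 h2) (sub_nonneg.2 h4), sq_nonneg (w2 - 1143/2000)]
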